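/- arXiv:2605.27828 — 3 statements merged into one kernel-verified Lean document; each statement's English description precedes it below -/
import Mathlib

section
/- Let R_n be the sprout sequence with seed F(t) having log F(t) = ∑_{n≥1} b_n t^n/n. Then the coefficient of h_n in the h-basis expansion of R_n equals b_n. -/
/- Symmetric functions in infinitely many variables `x₁, x₂, …` are modelled as
elements of `MvPowerSeries ℕ K`. A sprout sequence with seed
`F(t) = ∑ aₙ tⁿ` (`a₀ = 1`) is defined by `∑ₙ Rₙ tⁿ = ∏ᵢ F(xᵢ t)`; since `Rₙ` is
homogeneous of degree `n`, the variable `t` is recorded by the total degree, and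
the product `∏ᵢ F(xᵢ t)` is the power series whose coefficient on the monomial
`∏ᵢ xᵢ^{dᵢ}` is `∏ᵢ a_{dᵢ}`. -/

open Finset

noncomputable section

variable {K : Type*} [Field K] [CharZero K]

/-- Total degree of a monomial exponent vector. -/
def mdeg (d : ℕ →₀ ℕ) : ℕ := d.sum fun _ k => k

/-- The infinite product `∏_{i≥1} F(x_i t)` where `F(t) = ∑ aₙ tⁿ`: the
coefficient of `∏ xᵢ^{dᵢ}` is `∏ a_{dᵢ}`. -/
def sproutSeries (a : ℕ → K) : MvPowerSeries ℕ K :=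
  fun d => d.prod fun _ k => a k

/-- `sproutFn a n` is `Rₙ`, the degree-`n` homogeneous component of `∏ᵢ F(xᵢ t)`,
so that `∑ₙ (sproutFn a n) tⁿ = ∏ᵢ F(xᵢ t)`. -/
def sproutFn (a : ℕ → K) (n : ℕ) : MvPowerSeries ℕ K :=
  fun d => if mdeg d = n then sproutSeries a d else 0

/-- The multiset of nonzero exponents of a monomial. -/
def typeOf (d : ℕ →₀ ℕ) : Multiset ℕ := d.support.val.map d

/-- The monomial symmetric function `m_μ` (in infinitely many variables). -/
def msym (K : Type*) [Field K] (μ : Multiset ℕ) : MvPowerSeries ℕ K :=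
  fun d => if typeOf d = μ then 1 else 0

/-- The power sum symmetric function `p_k`. -/
def psym (K : Type*) [Field K] (k : ℕ) : MvPowerSeries ℕ K := msym K {k}

/-- `p_μ = p_{μ₁} p_{μ₂} ⋯`. -/
def pprod (K : Type*) [Field K] (μ : Multiset ℕ) : MvPowerSeries ℕ K :=
  (μ.map (psym K)).prod

/-- The complete homogeneous symmetric function `h_n`. -/
def hsym (K : Type*) [Field K] (n : ℕ) : MvPowerSeries ℕ K :=
  fun d => if mdeg d = n then 1 else 0

/-- `h_μ = h_{μ₁} h_{μ₂} ⋯`. -/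
def hprod (K : Type*) [Field K] (μ : Multiset ℕ) : MvPowerSeries ℕ K :=
  (μ.map (hsym K)).prod

/-- The elementary symmetric function `e_n`. -/
def esym (K : Type*) [Field K] (n : ℕ) : MvPowerSeries ℕ K :=
  msym K (Multiset.replicate n 1)

/-- `e_μ = e_{μ₁} e_{μ₂} ⋯`. -/
def eprod (K : Type*) [Field K] (μ : Multiset ℕ) : MvPowerSeries ℕ K :=
  (μ.map (esym K)).prod

/-- `z_λ = ∏ᵢ i^{mᵢ} mᵢ!` where `λ` has `mᵢ` parts equal to `i`. -/
def zPart (μ : Multiset ℕ) : ℕ :=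
  μ.prod * (μ.dedup.map fun i => (μ.count i).factorial).prod

/-- The parts of a partition arranged in weakly decreasing order. -/
def plist (μ : Multiset ℕ) : List ℕ := (μ.sort (· ≤ ·)).reverse

/-- `h_m` for an integer index, with `h_m = 0` for `m < 0`. -/
def hsymZ (K : Type*) [Field K] (m : ℤ) : MvPowerSeries ℕ K :=
  if 0 ≤ m then hsym K m.toNat else 0

/-- The Schur function `s_λ`, via the Jacobi–Trudi determinant `det[h_{λᵢ-i+j}]`,
where `l` is the weakly decreasing list of parts of `λ`. -/
def sschur (K : Type*) [Field K] (l : List ℕ) : MvPowerSeries ℕ K :=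
  Matrix.det (Matrix.of fun i j : Fin l.length =>
    hsymZ K ((l.get i : ℤ) - (i : ℤ) + (j : ℤ)))

/-- `a_m` for an integer index, with `a_m = 0` for `m < 0`. -/
def aZ (a : ℕ → K) (m : ℤ) : K := if 0 ≤ m then a m.toNat else 0

/-- The partition `⟨1ⁿ⟩` of `n`. -/
def onePartition (n : ℕ) : Nat.Partition n :=
  ⟨Multiset.replicate n 1, by
    intro i hi
    rw [Multiset.eq_of_mem_replicate hi]
    exact Nat.one_pos, by simp [Multiset.sum_replicate]⟩


section AuxiliaryLemmas

open PowerSeries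

variable {L : Type*} [Field L] [CharZero L]


lemma aux_deriv_mul {F G B C : PowerSeries L}
    (hF : X * d⁄dX L F = B * F) (hG : X * d⁄dX L G = C * G) :
    X * d⁄dX L (F * G) = (B + C) * (F * G) := by
  rw [Derivation.leibniz, smul_eq_mul, smul_eq_mul]
  linear_combination F * hG + G * hF

lemma aux_deriv_prod {ι : Type*} (s : Finset ι)
    (F B : ι → PowerSeries L) (h : ∀ i ∈ s, X * d⁄dX L (F i) = B i * F i) :
    X * d⁄dX L (∏ i ∈ s, F i) = (∑ i ∈ s, B i) * ∏ i ∈ s, F i := by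
  induction s using Finset.cons_induction with
  | empty => simp
  | cons a s ha ih =>
      rw [Finset.prod_cons, Finset.sum_cons]
      exact aux_deriv_mul (h a (Finset.mem_cons_self a s))
        (ih fun i hi => h i (Finset.mem_cons_of_mem hi))

lemma aux_geo {n : ℕ} (hn : 1 ≤ n) {ζ : L} (hζ : IsPrimitiveRoot ζ n) (k : ℕ) :
    ∑ i ∈ range n, ζ ^ (i * k) = if n ∣ k then (n : L) else 0 := by
  have : ∀ i, ζ ^ (i * k) = (ζ ^ k) ^ i := fun i => by rw [← pow_mul, mul_comm]
  simp_rw [this]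
  split_ifs with h
  · have : ζ ^ k = 1 := (hζ.pow_eq_one_iff_dvd k).mpr h
    simp [this]
  · have h1 : ζ ^ k ≠ 1 := fun hc => h ((hζ.pow_eq_one_iff_dvd k).mp hc)
    rw [geom_sum_eq h1]
    have : (ζ ^ k) ^ n = 1 := by
      rw [← pow_mul, mul_comm, pow_mul, hζ.pow_eq_one, one_pow]
    rw [this, sub_self, zero_div]

lemma aux_single (A B : ℕ → L)
    (hrec : ∀ m : ℕ, 1 ≤ m → (m : L) * A m = ∑ k ∈ Icc 1 m, B k * A (m - k))
    (ζ : L) (i : ℕ) :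
    X * d⁄dX L (PowerSeries.mk fun k => A k * ζ ^ (i * k)) =
      (PowerSeries.mk fun k => if k = 0 then 0 else B k * ζ ^ (i * k)) *
        (PowerSeries.mk fun k => A k * ζ ^ (i * k)) := by
  ext m
  match m with
  | 0 => simp [coeff_mul]
  | m + 1 =>
    rw [coeff_succ_X_mul, coeff_derivative, coeff_mk, coeff_mul,
      Finset.Nat.sum_antidiagonal_eq_sum_range_succ_mk]
    simp only [coeff_mk]
    rw [Finset.sum_range_succ']
    simp only [if_pos rfl, zero_mul, add_zero]
    have key : ∀ x ∈ Finset.range (m + 1),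
        (if x + 1 = 0 then (0:L) else B (x+1) * ζ ^ (i * (x+1))) *
          (A (m + 1 - (x+1)) * ζ ^ (i * (m + 1 - (x+1)))) =
        (B (x+1) * A (m - x)) * ζ ^ (i * (m+1)) := by
      intro x hx
      rw [if_neg (Nat.succ_ne_zero x)]
      have hle : x + 1 ≤ m + 1 := by have := Finset.mem_range.mp hx; omega
      have : i * (x+1) + i * (m + 1 - (x+1)) = i * (m+1) := by
        rw [← Nat.mul_add, Nat.add_sub_cancel' hle]
      rw [← this, pow_add]
      have : m + 1 - (x + 1) = m - x := by omega
      rw [this]; ring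
    rw [Finset.sum_congr rfl key, ← Finset.sum_mul]
    have : ∑ x ∈ Finset.range (m+1), B (x+1) * A (m - x)
        = ∑ k ∈ Icc 1 (m+1), B k * A (m + 1 - k) := by
      rw [← Finset.Ico_add_one_right_eq_Icc, Finset.sum_Ico_eq_sum_range]
      apply Finset.sum_congr (by norm_num) fun x hx => ?_
      congr 2 <;> omega
    rw [this, ← hrec (m+1) (Nat.succ_le_succ (Nat.zero_le m))]
    push_cast
    ring

lemma aux_key {n : ℕ} (hn : 1 ≤ n) {ζ : L} (hζ : IsPrimitiveRoot ζ n)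
    (A B : ℕ → L) (hA0 : A 0 = 1)
    (hrec : ∀ m : ℕ, 1 ≤ m → (m : L) * A m = ∑ k ∈ Icc 1 m, B k * A (m - k)) :
    (∀ m, 1 ≤ m → m < n →
      coeff m (∏ i ∈ range n, PowerSeries.mk fun k => A k * ζ ^ (i * k)) = 0)
    ∧ coeff n (∏ i ∈ range n, PowerSeries.mk fun k => A k * ζ ^ (i * k)) = B n := by
  set G := ∏ i ∈ range n, PowerSeries.mk fun k => A k * ζ ^ (i * k) with hGdef
  have hde : X * d⁄dX L G =
      (∑ i ∈ range n, PowerSeries.mk fun k =>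
        if k = 0 then 0 else B k * ζ ^ (i * k)) * G :=
    aux_deriv_prod _ _ _ (fun i _ => aux_single A B hrec ζ i)
  have hG0 : coeff 0 G = 1 := by
    rw [hGdef, coeff_zero_eq_constantCoeff, map_prod]
    simp [hA0]
  have hBsum : ∀ k, coeff k (∑ i ∈ range n, PowerSeries.mk fun j =>
      if j = 0 then 0 else B j * ζ ^ (i * j))
      = if k ≠ 0 ∧ n ∣ k then (n : L) * B k else 0 := by
    intro k
    rw [map_sum]
    simp only [coeff_mk]
    rcases eq_or_ne k 0 with rfl | hk
    · simp
    · simp only [if_neg hk]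
      rw [← Finset.mul_sum, aux_geo hn hζ k]
      by_cases h : n ∣ k
      · rw [if_pos h, if_pos ⟨hk, h⟩, mul_comm]
      · rw [if_neg h, if_neg (fun hc => h hc.2), mul_zero]
  have hrel : ∀ m : ℕ, coeff (m+1) G * ((m : L) + 1)
      = ∑ k ∈ range (m+2),
          (if k ≠ 0 ∧ n ∣ k then (n : L) * B k else 0) * coeff (m+1-k) G := by
    intro m
    have h := congrArg (coeff (m+1)) hde
    rw [coeff_succ_X_mul, coeff_derivative, coeff_mul,
      Finset.Nat.sum_antidiagonal_eq_sum_range_succ_mk] at h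
    simp only [hBsum] at h
    exact h
  constructor
  · intro m h1 h2
    obtain ⟨m', rfl⟩ : ∃ m', m = m' + 1 := ⟨m - 1, by omega⟩
    have h := hrel m'
    have hz : ∀ k ∈ range (m' + 2),
        (if k ≠ 0 ∧ n ∣ k then (n : L) * B k else 0) * coeff (m'+1-k) G = 0 := by
      intro k hk
      have : ¬ (k ≠ 0 ∧ n ∣ k) := by
        rintro ⟨hk0, hdvd⟩
        have := Nat.le_of_dvd (Nat.pos_of_ne_zero hk0) hdvd
        have := Finset.mem_range.mp hk
        omega
      rw [if_neg this, zero_mul]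
    rw [Finset.sum_eq_zero hz] at h
    have hne : ((m' : L) + 1) ≠ 0 := by
      have : ((m' + 1 : ℕ) : L) ≠ 0 := Nat.cast_ne_zero.mpr (Nat.succ_ne_zero m')
      push_cast at this; exact this
    exact (mul_eq_zero.mp h).resolve_right hne
  · obtain ⟨n', rfl⟩ : ∃ n', n = n' + 1 := ⟨n - 1, by omega⟩
    have h := hrel n'
    rw [Finset.sum_eq_single (n' + 1)] at h
    · rw [if_pos ⟨Nat.succ_ne_zero n', dvd_refl _⟩, Nat.sub_self, hG0, mul_one] at h
      have hne : ((n' : L) + 1) ≠ 0 := by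
        have : ((n' + 1 : ℕ) : L) ≠ 0 := Nat.cast_ne_zero.mpr (Nat.succ_ne_zero n')
        push_cast at this; exact this
      have h2 : coeff (n' + 1) G * ((n' : L) + 1)
          = B (n' + 1) * ((n' : L) + 1) := by rw [h]; push_cast; ring
      exact mul_right_cancel₀ hne h2
    · intro k hk hkne
      have : ¬ (k ≠ 0 ∧ n' + 1 ∣ k) := by
        rintro ⟨hk0, hdvd⟩
        have := Nat.le_of_dvd (Nat.pos_of_ne_zero hk0) hdvd
        have := Finset.mem_range.mp hk
        omega
      rw [if_neg this, zero_mul]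
    · intro hmem
      exact absurd (Finset.mem_range.mpr (by omega)) hmem


/-- weight of a monomial -/
def Wt (n : ℕ) (ζ : L) (d : ℕ →₀ ℕ) : L := ∏ i ∈ range n, ζ ^ (i * d i)

lemma Wt_add (n : ℕ) (ζ : L) (p q : ℕ →₀ ℕ) :
    Wt n ζ (p + q) = Wt n ζ p * Wt n ζ q := by
  rw [Wt, Wt, Wt, ← Finset.prod_mul_distrib]
  exact Finset.prod_congr rfl fun i _ => by
    rw [Finsupp.add_apply, Nat.mul_add, pow_add]

lemma Tmul (n : ℕ) (ζ : L) (f g : MvPowerSeries ℕ L) (m : ℕ) :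
    ∑ d ∈ finsuppAntidiag (range n) m, MvPowerSeries.coeff d (f * g) * Wt n ζ d
    = ∑ uv ∈ antidiagonal m,
        (∑ d ∈ finsuppAntidiag (range n) uv.1, MvPowerSeries.coeff d f * Wt n ζ d) *
        (∑ d ∈ finsuppAntidiag (range n) uv.2, MvPowerSeries.coeff d g * Wt n ζ d) := by
  have hadd : ∀ p q : ℕ →₀ ℕ, (range n).sum ⇑(p + q) = (range n).sum ⇑p + (range n).sum ⇑q := by
    intro p q
    simp [Finsupp.add_apply, Finset.sum_add_distrib]
  simp_rw [MvPowerSeries.coeff_mul, Finset.sum_mul_sum, ← Finset.sum_product',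
    Finset.sum_mul]
  rw [Finset.sum_sigma', Finset.sum_sigma']
  refine Finset.sum_nbij'
    (fun x => ⟨((range n).sum ⇑x.snd.1, (range n).sum ⇑x.snd.2), x.snd⟩)
    (fun y => ⟨y.snd.1 + y.snd.2, y.snd⟩) ?_ ?_ ?_ ?_ ?_
  · rintro ⟨d, p, q⟩ hx
    simp only [Finset.mem_sigma, Finset.mem_finsuppAntidiag, Finset.mem_antidiagonal] at hx
    obtain ⟨⟨hsum, hsupp⟩, hpq⟩ := hx
    replace hpq : p + q = d := HasAntidiagonal.mem_antidiagonal.mp hpq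
    subst hpq
    have hps : p.support ⊆ range n := fun a ha => hsupp (by
      rw [Finsupp.mem_support_iff] at ha ⊢
      rw [Finsupp.add_apply]
      omega)
    have hqs : q.support ⊆ range n := fun a ha => hsupp (by
      rw [Finsupp.mem_support_iff] at ha ⊢
      rw [Finsupp.add_apply]
      omega)
    simp only [Finset.mem_sigma, Finset.mem_antidiagonal, Finset.mem_product,
      Finset.mem_finsuppAntidiag]
    exact ⟨by rw [← hsum, hadd]; exact HasAntidiagonal.mem_antidiagonal.mpr rfl, ⟨trivial, hps⟩, ⟨trivial, hqs⟩⟩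
  · rintro ⟨⟨u, v⟩, p, q⟩ hy
    simp only [Finset.mem_sigma, Finset.mem_antidiagonal, Finset.mem_product,
      Finset.mem_finsuppAntidiag] at hy
    obtain ⟨huv, ⟨hpu, hps⟩, ⟨hqv, hqs⟩⟩ := hy
    simp only [Finset.mem_sigma, Finset.mem_finsuppAntidiag, Finset.mem_antidiagonal]
    refine ⟨⟨?_, ?_⟩, HasAntidiagonal.mem_antidiagonal.mpr rfl⟩
    · rw [hadd, hpu, hqv]; simpa using huv
    · exact (Finsupp.support_add).trans (Finset.union_subset hps hqs)
  · rintro ⟨d, p, q⟩ hx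
    simp only [Finset.mem_sigma, Finset.mem_antidiagonal] at hx
    obtain ⟨-, hpq⟩ := hx
    replace hpq : p + q = d := HasAntidiagonal.mem_antidiagonal.mp hpq
    subst hpq
    rfl
  · rintro ⟨⟨u, v⟩, p, q⟩ hy
    simp only [Finset.mem_sigma, Finset.mem_antidiagonal, Finset.mem_product,
      Finset.mem_finsuppAntidiag] at hy
    obtain ⟨huv, ⟨hpu, hps⟩, ⟨hqv, hqs⟩⟩ := hy
    simp only [hpu, hqv]
  · rintro ⟨d, p, q⟩ hx
    simp only [Finset.mem_sigma, Finset.mem_antidiagonal] at hx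
    obtain ⟨-, hpq⟩ := hx
    replace hpq : p + q = d := HasAntidiagonal.mem_antidiagonal.mp hpq
    subst hpq
    simp only [Wt_add]
    ring

/-- Substitution `xᵢ ↦ ζ^i t` for `i < n`, `xᵢ ↦ 0` otherwise, as a ring hom. -/
def Tmap (n : ℕ) (ζ : L) : MvPowerSeries ℕ L →+* PowerSeries L where
  toFun f := PowerSeries.mk fun m =>
    ∑ d ∈ finsuppAntidiag (range n) m, MvPowerSeries.coeff d f * Wt n ζ d
  map_one' := by
    ext m
    rw [coeff_mk]
    simp only [MvPowerSeries.coeff_one, ite_mul, one_mul, zero_mul]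
    rw [Finset.sum_ite_eq' (finsuppAntidiag (range n) m) (0 : ℕ →₀ ℕ) (Wt n ζ)]
    have h0 : (0 : ℕ →₀ ℕ) ∈ finsuppAntidiag (range n) m ↔ m = 0 := by
      simp [Finset.mem_finsuppAntidiag, eq_comm]
    rw [PowerSeries.coeff_one]
    split_ifs with h1 h2 h2
    · simp [Wt]
    · exact absurd (h0.mp h1) h2
    · exact absurd (h0.mpr h2) h1
    · rfl
  map_mul' f g := by
    ext m
    rw [coeff_mk, PowerSeries.coeff_mul]
    rw [Tmul]
    exact Finset.sum_congr rfl fun uv _ => by rw [coeff_mk, coeff_mk]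
  map_zero' := by
    ext m
    simp
  map_add' f g := by
    ext m
    simp [map_add, add_mul, Finset.sum_add_distrib]

lemma Tmap_coeff (n : ℕ) (ζ : L) (f : MvPowerSeries ℕ L) (m : ℕ) :
    PowerSeries.coeff m (Tmap n ζ f)
    = ∑ d ∈ finsuppAntidiag (range n) m, MvPowerSeries.coeff d f * Wt n ζ d := by
  simp [Tmap, coeff_mk]

/-- `h_m(1, ζ, …, ζ^{n-1})`. -/
def Hval (n : ℕ) (ζ : L) (m : ℕ) : L := ∑ d ∈ finsuppAntidiag (range n) m, Wt n ζ d

lemma mdeg_of_mem {n m : ℕ} {d : ℕ →₀ ℕ} (hd : d ∈ finsuppAntidiag (range n) m) :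
    mdeg d = m := by
  rw [Finset.mem_finsuppAntidiag] at hd
  rw [mdeg, Finsupp.sum,
    Finset.sum_subset hd.2 (fun x _ hx => Finsupp.notMem_support_iff.mp hx)]
  exact hd.1

lemma T_hsym (n : ℕ) (ζ : L) (j : ℕ) :
    Tmap n ζ (hsym L j) = PowerSeries.C (Hval n ζ j) * X ^ j := by
  ext m
  rw [Tmap_coeff, PowerSeries.coeff_C_mul, PowerSeries.coeff_X_pow]
  have key : ∀ d ∈ finsuppAntidiag (range n) m,
      MvPowerSeries.coeff d (hsym L j) * Wt n ζ d
        = (if m = j then (1:L) else 0) * Wt n ζ d := by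
    intro d hd
    rw [MvPowerSeries.coeff_apply]
    show (if mdeg d = j then (1:L) else 0) * Wt n ζ d = _
    rw [mdeg_of_mem hd]
  rw [Finset.sum_congr rfl key, ← Finset.mul_sum]
  split_ifs with h
  · subst h; rw [one_mul, mul_one]; rfl
  · rw [zero_mul, mul_zero]

lemma T_hprod (n : ℕ) (ζ : L) (μ : Multiset ℕ) :
    Tmap n ζ (hprod L μ)
      = PowerSeries.C ((μ.map (Hval n ζ)).prod) * X ^ μ.sum := by
  induction μ using Multiset.induction with
  | empty => simp [hprod]
  | cons a s ih =>
      have : hprod L (a ::ₘ s) = hsym L a * hprod L s := by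
        rw [hprod, hprod, Multiset.map_cons, Multiset.prod_cons]
      rw [this, map_mul, ih, T_hsym, Multiset.map_cons, Multiset.prod_cons,
        Multiset.sum_cons, map_mul, pow_add]
      ring

lemma Hval_eq_coeff (n : ℕ) (ζ : L) (m : ℕ) :
    Hval n ζ m = PowerSeries.coeff m
      (∏ i ∈ range n, PowerSeries.mk fun k => (1:L) * ζ ^ (i * k)) := by
  rw [PowerSeries.coeff_prod]
  apply Finset.sum_congr rfl
  intro d _
  simp [Wt, coeff_mk]

lemma Hval_facts {n : ℕ} (hn : 1 ≤ n) {ζ : L} (hζ : IsPrimitiveRoot ζ n) :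
    (∀ m, 1 ≤ m → m < n → Hval n ζ m = 0) ∧ Hval n ζ n = 1 := by
  have key := aux_key hn hζ (fun _ => (1:L)) (fun _ => (1:L)) rfl (by
    intro m hm
    simp only [mul_one, one_mul]
    rw [Finset.sum_const, Nat.card_Icc]
    simp)
  exact ⟨fun m h1 h2 => by rw [Hval_eq_coeff]; exact key.1 m h1 h2,
    by rw [Hval_eq_coeff]; exact key.2⟩

lemma Tmap_C (n : ℕ) (ζ : L) (x : L) :
    Tmap n ζ (MvPowerSeries.C x) = PowerSeries.C x := by
  ext m
  rw [Tmap_coeff, PowerSeries.coeff_C]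
  simp only [MvPowerSeries.coeff_C, ite_mul, zero_mul]
  rw [Finset.sum_ite_eq' (finsuppAntidiag (range n) m) (0 : ℕ →₀ ℕ)
    (fun d => x * Wt n ζ d)]
  have h0 : (0 : ℕ →₀ ℕ) ∈ finsuppAntidiag (range n) m ↔ m = 0 := by
    simp [Finset.mem_finsuppAntidiag, eq_comm]
  split_ifs with h1 h2 h2
  · simp [Wt]
  · exact absurd (h0.mp h1) h2
  · exact absurd (h0.mpr h2) h1
  · rfl

lemma part_small {n : ℕ} (hn : 1 ≤ n) (l : Nat.Partition n)
    (hne : l ≠ Nat.Partition.indiscrete n) :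
    ∃ j ∈ l.parts, 1 ≤ j ∧ j < n := by
  have hsum := l.parts_sum
  have hne0 : l.parts ≠ 0 := by
    intro h
    rw [h] at hsum
    simp at hsum
    omega
  obtain ⟨j, hj⟩ := Multiset.exists_mem_of_ne_zero hne0
  refine ⟨j, hj, l.parts_pos hj, ?_⟩
  by_contra hlt
  push_neg at hlt
  have hjle : j ≤ n := by
    rw [← hsum]
    exact Multiset.single_le_sum (fun x hx => Nat.zero_le x) j hj
  have hjn : j = n := le_antisymm hjle hlt
  subst hjn
  apply hne
  ext1
  rw [Nat.Partition.indiscrete_parts (by omega)]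
  obtain ⟨t, ht⟩ := Multiset.exists_cons_of_mem hj
  have htsum : t.sum = 0 := by
    rw [ht, Multiset.sum_cons] at hsum
    omega
  have ht0 : t = 0 := by
    apply Multiset.eq_zero_of_forall_notMem
    intro x hx
    have hpos := l.parts_pos (by rw [ht]; exact Multiset.mem_cons_of_mem hx)
    have := Multiset.single_le_sum (fun y _ => Nat.zero_le y) x hx
    omega
  rw [ht, ht0, Multiset.cons_zero]

end AuxiliaryLemmas

section MapLemmas

variable {K : Type*} [Field K] [CharZero K] {L : Type*} [Field L] [CharZero L]

lemma map_hsym (ι : K →+* L) (j : ℕ) :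
    MvPowerSeries.map ι (hsym K j) = hsym L j := by
  apply MvPowerSeries.ext
  intro d
  rw [MvPowerSeries.coeff_map, MvPowerSeries.coeff_apply, MvPowerSeries.coeff_apply]
  show ι (if mdeg d = j then 1 else 0) = (if mdeg d = j then 1 else 0)
  split_ifs <;> simp

lemma map_hprod (ι : K →+* L) (μ : Multiset ℕ) :
    MvPowerSeries.map ι (hprod K μ) = hprod L μ := by
  rw [hprod, hprod, map_multiset_prod, Multiset.map_map]
  congr 1
  exact Multiset.map_congr rfl fun j _ => map_hsym ι j

lemma map_sproutFn (ι : K →+* L) (a : ℕ → K) (n : ℕ) :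
    MvPowerSeries.map ι (sproutFn a n) = sproutFn (fun k => ι (a k)) n := by
  apply MvPowerSeries.ext
  intro d
  rw [MvPowerSeries.coeff_map, MvPowerSeries.coeff_apply, MvPowerSeries.coeff_apply]
  show ι (if mdeg d = n then sproutSeries a d else 0)
    = (if mdeg d = n then sproutSeries (fun k => ι (a k)) d else 0)
  split_ifs
  · rw [sproutSeries, sproutSeries, map_finsuppProd]
  · exact map_zero ι

end MapLemmas

/-- With `log F(t) = ∑ bₙ tⁿ/n`, the coefficient of `hₙ` in
the `h`-expansion of `Rₙ` equals `bₙ`. -/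
theorem statement12 (a b : ℕ → K) (ha0 : a 0 = 1)
    (hb : ∀ n : ℕ, 1 ≤ n → (n : K) * a n = ∑ k ∈ Finset.Icc 1 n, b k * a (n - k))
    (n : ℕ) (hn : 1 ≤ n) (c : Nat.Partition n → K)
    (hc : sproutFn a n = ∑ l : Nat.Partition n, c l • hprod K l.parts) :
    c (Nat.Partition.indiscrete n) = b n := by
  classical
  set L := AlgebraicClosure K with hL
  haveI : CharZero L := charZero_of_injective_algebraMap (algebraMap K L).injective
  haveI : NeZero ((n : ℕ) : L) := ⟨Nat.cast_ne_zero.mpr (by omega)⟩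
  obtain ⟨ζ, hζ⟩ := HasEnoughRootsOfUnity.exists_primitiveRoot L n
  set ι : K →+* L := algebraMap K L with hι
  -- transport `hc` to `L`
  have hcL : sproutFn (fun k => ι (a k)) n
      = ∑ l : Nat.Partition n, ι (c l) • hprod L l.parts := by
    have h := congrArg (MvPowerSeries.map ι) hc
    rw [map_sproutFn] at h
    rw [h, map_sum]
    refine Finset.sum_congr rfl fun l _ => ?_
    rw [MvPowerSeries.smul_eq_C_mul, map_mul, MvPowerSeries.map_C, map_hprod,
      MvPowerSeries.smul_eq_C_mul]
  have happ := congrArg (fun F => PowerSeries.coeff n (Tmap n ζ F)) hcL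
  -- LHS is `ι (b n)`
  have hrecL : ∀ m : ℕ, 1 ≤ m → ((m : ℕ) : L) * ι (a m)
      = ∑ k ∈ Finset.Icc 1 m, ι (b k) * ι (a (m - k)) := by
    intro m hm
    have := congrArg ι (hb m hm)
    rw [map_mul, map_natCast, map_sum] at this
    rw [this]
    exact Finset.sum_congr rfl fun k _ => by rw [map_mul]
  have key := aux_key (by omega : 1 ≤ n) hζ (fun k => ι (a k)) (fun k => ι (b k))
    (by simp [ha0]) hrecL
  have hLHS : PowerSeries.coeff n (Tmap n ζ (sproutFn (fun k => ι (a k)) n))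
      = ι (b n) := by
    have key2 : PowerSeries.coeff n
        (∏ i ∈ range n, PowerSeries.mk fun k => ι (a k) * ζ ^ (i * k)) = ι (b n) := key.2
    rw [Tmap_coeff, ← key2, PowerSeries.coeff_prod]
    apply Finset.sum_congr rfl
    intro d hd
    rw [MvPowerSeries.coeff_apply]
    show (if mdeg d = n then sproutSeries (fun k => ι (a k)) d else 0) * Wt n ζ d = _
    rw [if_pos (mdeg_of_mem hd)]
    simp only [PowerSeries.coeff_mk]
    rw [Finset.prod_mul_distrib]
    congr 1
    rw [sproutSeries, Finsupp.prod]
    rw [Finset.mem_finsuppAntidiag] at hd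
    refine Finset.prod_subset hd.2 fun x _ hx => ?_
    rw [Finsupp.notMem_support_iff.mp hx, ha0, map_one]
  -- RHS collapses to `ι (c (indiscrete n))`
  have hterm : ∀ l : Nat.Partition n,
      PowerSeries.coeff n (Tmap n ζ (hprod L l.parts))
        = if l = Nat.Partition.indiscrete n then 1 else 0 := by
    intro l
    rw [T_hprod, l.parts_sum, PowerSeries.coeff_C_mul, PowerSeries.coeff_X_pow,
      if_pos rfl, mul_one]
    split_ifs with h
    · subst h
      rw [Nat.Partition.indiscrete_parts (by omega), Multiset.map_singleton,
        Multiset.prod_singleton]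
      exact (Hval_facts (by omega) hζ).2
    · obtain ⟨j, hjmem, hj1, hjn⟩ := part_small (by omega) l h
      apply Multiset.prod_eq_zero
      rw [← (Hval_facts (by omega : 1 ≤ n) hζ).1 j hj1 hjn]
      exact Multiset.mem_map_of_mem _ hjmem
  have hRHS : PowerSeries.coeff n
      (Tmap n ζ (∑ l : Nat.Partition n, ι (c l) • hprod L l.parts))
        = ι (c (Nat.Partition.indiscrete n)) := by
    rw [map_sum, map_sum]
    have : ∀ l : Nat.Partition n,
        PowerSeries.coeff n (Tmap n ζ (ι (c l) • hprod L l.parts))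
          = if l = Nat.Partition.indiscrete n then ι (c l) else 0 := by
      intro l
      rw [MvPowerSeries.smul_eq_C_mul, map_mul, Tmap_C, PowerSeries.coeff_C_mul,
        hterm l]
      split_ifs
      · rw [mul_one]
      · rw [mul_zero]
    rw [Finset.sum_congr rfl fun l _ => this l,
      Finset.sum_ite_eq' Finset.univ (Nat.Partition.indiscrete n) (fun l => ι (c l)),
      if_pos (Finset.mem_univ _)]
  rw [hLHS, hRHS] at happ
  exact (algebraMap K L).injective happ.symm

end
end

section
/- For any partition λ ⊢ n: the coefficient of e_1^n in the e-basis expansion of the monomial symmetric function m_λ is 1 if λ = (n) and 0 otherwise; and the coefficient of e_2 e_1^{n-2} is −n if λ = (n), 1 if λ = (n−1,1), and 0 otherwise. -/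
/- Symmetric functions in infinitely many variables `x₁, x₂, …` are modelled as
elements of `MvPowerSeries ℕ K`. A sprout sequence with seed
`F(t) = ∑ aₙ tⁿ` (`a₀ = 1`) is defined by `∑ₙ Rₙ tⁿ = ∏ᵢ F(xᵢ t)`; since `Rₙ` is
homogeneous of degree `n`, the variable `t` is recorded by the total degree, and
the product `∏ᵢ F(xᵢ t)` is the power series whose coefficient on the monomial
`∏ᵢ xᵢ^{dᵢ}` is `∏ᵢ a_{dᵢ}`. -/

open Finset

noncomputable section

variable {K : Type*} [Field K] [CharZero K]

/-- The partition `⟨2, 1^{n-2}⟩` of `n` (for `n ≥ 2`). -/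
def twoOnePartition (n : ℕ) (hn : 2 ≤ n) : Nat.Partition n :=
  ⟨2 ::ₘ Multiset.replicate (n - 2) 1, by
    intro k hk
    rcases Multiset.mem_cons.mp hk with h | h
    · omega
    · rw [Multiset.eq_of_mem_replicate h]; exact Nat.one_pos, by
      simp [Multiset.sum_replicate]; omega⟩

set_option linter.unusedSectionVars false

def D2 (a b : ℕ) : ℕ →₀ ℕ := Finsupp.single 0 a + Finsupp.single 1 b

lemma D2_apply (a b j : ℕ) : D2 a b j = if j = 0 then a else if j = 1 then b else 0 := by
  simp only [D2, Finsupp.add_apply, Finsupp.single_apply]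
  split_ifs <;> omega

lemma D2_eq_zero_iff (a b : ℕ) : D2 a b = 0 ↔ a = 0 ∧ b = 0 := by
  constructor
  · intro h
    have h0 := DFunLike.congr_fun h 0
    have h1 := DFunLike.congr_fun h 1
    simp only [D2_apply, Finsupp.coe_zero, Pi.zero_apply] at h0 h1
    norm_num at h0 h1
    exact ⟨h0, h1⟩
  · rintro ⟨rfl, rfl⟩
    ext j; rw [D2_apply]; split_ifs <;> rfl

lemma eprod_cons (k : ℕ) (t : Multiset ℕ) :
    eprod K (k ::ₘ t) = esym K k * eprod K t := by
  rw [eprod, Multiset.map_cons, Multiset.prod_cons]; rfl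

lemma apply_mul (φ ψ : MvPowerSeries ℕ K) (d : ℕ →₀ ℕ) :
    (φ * ψ) d = ∑ p ∈ Finset.HasAntidiagonal.antidiagonal d, φ p.1 * ψ p.2 :=
  MvPowerSeries.coeff_mul d φ ψ

lemma one_apply' (d : ℕ →₀ ℕ) : (1 : MvPowerSeries ℕ K) d = if d = 0 then 1 else 0 :=
  MvPowerSeries.coeff_one d

lemma D2_add (a b a' b' : ℕ) : D2 a b + D2 a' b' = D2 (a + a') (b + b') := by
  simp only [D2, Finsupp.single_add]; abel


lemma eq_D2_of_le {p : ℕ →₀ ℕ} {a b : ℕ} (q : ℕ →₀ ℕ) (h : p + q = D2 a b) :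
    p = D2 (p 0) (p 1) := by
  ext j
  have hj := DFunLike.congr_fun h j
  simp only [Finsupp.coe_add, Pi.add_apply] at hj
  rw [D2_apply] at hj
  rw [D2_apply]
  split_ifs at hj ⊢ <;> subst_vars <;> omega


lemma sum_antidiagonal_D2 (a b : ℕ) (f : (ℕ →₀ ℕ) × (ℕ →₀ ℕ) → K) :
    ∑ p ∈ Finset.HasAntidiagonal.antidiagonal (D2 a b), f p
    = ∑ i ∈ Finset.range (a+1), ∑ j ∈ Finset.range (b+1),
        f (D2 i j, D2 (a-i) (b-j)) := by
  refine Eq.trans ?_ (Finset.sum_product (s := Finset.range (a+1)) (t := Finset.range (b+1))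
    (f := fun q => f (D2 q.1 q.2, D2 (a - q.1) (b - q.2))))
  apply Finset.sum_nbij' (i := fun p => (p.1 0, p.1 1))
    (j := fun q => (D2 q.1 q.2, D2 (a - q.1) (b - q.2)))
  · intro p hp
    rw [Finset.HasAntidiagonal.mem_antidiagonal] at hp
    have h0 := DFunLike.congr_fun hp 0
    have h1 := DFunLike.congr_fun hp 1
    simp only [Finsupp.coe_add, Pi.add_apply, D2_apply] at h0 h1; norm_num at h0 h1
    simp only [Finset.mem_product, Finset.mem_range]
    omega
  · intro q hq
    simp only [Finset.mem_product, Finset.mem_range] at hq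
    rw [Finset.HasAntidiagonal.mem_antidiagonal, D2_add]
    congr 1 <;> omega
  · intro p hp
    rw [Finset.HasAntidiagonal.mem_antidiagonal] at hp
    have hp1 := eq_D2_of_le p.2 hp
    have hp2 := eq_D2_of_le p.1 (by rw [add_comm]; exact hp)
    have h0 := DFunLike.congr_fun hp 0
    have h1 := DFunLike.congr_fun hp 1
    simp only [Finsupp.coe_add, Pi.add_apply, D2_apply] at h0 h1; norm_num at h0 h1
    have h2 : p.2 = D2 (a - p.1 0) (b - p.1 1) := by
      rw [hp2]; congr 1 <;> omega
    exact (Prod.ext_iff.mpr ⟨hp1, h2⟩).symm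
  · intro q hq
    simp only [Finset.mem_product, Finset.mem_range] at hq
    simp [D2_apply]
  · intro p hp
    rw [Finset.HasAntidiagonal.mem_antidiagonal] at hp
    have hp1 := eq_D2_of_le p.2 hp
    have hp2 := eq_D2_of_le p.1 (by rw [add_comm]; exact hp)
    have h0 := DFunLike.congr_fun hp 0
    have h1 := DFunLike.congr_fun hp 1
    simp only [Finsupp.coe_add, Pi.add_apply, D2_apply] at h0 h1; norm_num at h0 h1
    have h2 : p.2 = D2 (a - p.1 0) (b - p.1 1) := by
      rw [hp2]; congr 1 <;> omega
    have h3 : p = (D2 (p.1 0) (p.1 1), D2 (a - p.1 0) (b - p.1 1)) :=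
      Prod.ext_iff.mpr ⟨hp1, h2⟩
    conv_lhs => rw [h3]


lemma typeOf_eq_replicate_iff (d : ℕ →₀ ℕ) (k : ℕ) :
    typeOf d = Multiset.replicate k 1 ↔ d.support.card = k ∧ ∀ j, d j ≤ 1 := by
  unfold typeOf
  rw [Multiset.eq_replicate]
  constructor
  · rintro ⟨hc, h1⟩
    refine ⟨by simpa using hc, fun j => ?_⟩
    by_cases hj : j ∈ d.support
    · exact le_of_eq (h1 (d j) (Multiset.mem_map_of_mem _ hj))
    · simp [Finsupp.notMem_support_iff.mp hj]
  · rintro ⟨hc, h1⟩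
    refine ⟨by simpa using hc, ?_⟩
    rintro b hb
    obtain ⟨j, hj, rfl⟩ := Multiset.mem_map.mp hb
    have h2 := Finsupp.mem_support_iff.mp hj
    have := h1 j
    omega


lemma card_support_D2 (a b : ℕ) :
    (D2 a b).support.card = (if a = 0 then 0 else 1) + (if b = 0 then 0 else 1) := by
  have hdis : Disjoint (Finsupp.single (0:ℕ) a).support (Finsupp.single (1:ℕ) b).support := by
    rw [Finset.disjoint_left]
    intro x hx hx'
    have h0 := Finsupp.support_single_subset hx
    have h1 := Finsupp.support_single_subset hx'
    simp only [Finset.mem_singleton] at h0 h1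
    omega
  rw [D2, Finsupp.support_add_eq hdis, Finset.card_union_of_disjoint hdis]
  congr 1
  · rcases eq_or_ne a 0 with rfl | ha <;> simp [Finsupp.support_single_ne_zero, *]
  · rcases eq_or_ne b 0 with rfl | hb <;> simp [Finsupp.support_single_ne_zero, *]


lemma esym_cond_iff (k a b : ℕ) (hk : 0 < k) :
    typeOf (D2 a b) = Multiset.replicate k 1 ↔
      ((k = 1 ∧ a = 1 ∧ b = 0) ∨ (k = 1 ∧ a = 0 ∧ b = 1) ∨ (k = 2 ∧ a = 1 ∧ b = 1)) := by
  rw [typeOf_eq_replicate_iff, card_support_D2]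
  have h1 : (∀ j, D2 a b j ≤ 1) ↔ a ≤ 1 ∧ b ≤ 1 := by
    constructor
    · intro h; exact ⟨by simpa [D2_apply] using h 0, by simpa [D2_apply] using h 1⟩
    · rintro ⟨ha, hb⟩ j; rw [D2_apply]; split_ifs <;> omega
  rw [h1]
  split_ifs <;> omega


lemma esym_apply (k : ℕ) (d : ℕ →₀ ℕ) :
    esym K k d = if typeOf d = Multiset.replicate k 1 then 1 else 0 := rfl


lemma esym_D2 (k a b : ℕ) (hk : 0 < k) :
    esym K k (D2 a b) = if ((k = 1 ∧ a = 1 ∧ b = 0) ∨ (k = 1 ∧ a = 0 ∧ b = 1) ∨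
      (k = 2 ∧ a = 1 ∧ b = 1)) then 1 else 0 := by
  rw [esym_apply]
  exact if_congr (esym_cond_iff k a b hk) rfl rfl

lemma cons_eq_replicate_succ_iff (k : ℕ) (t : Multiset ℕ) (m : ℕ) :
    k ::ₘ t = Multiset.replicate (m+1) 1 ↔ (k = 1 ∧ t = Multiset.replicate m 1) := by
  rw [Multiset.replicate_succ, Multiset.cons_eq_cons]
  constructor
  · rintro (⟨rfl, rfl⟩ | ⟨hne, cs, rfl, hcs⟩)
    · exact ⟨rfl, rfl⟩
    · exfalso
      have : k ∈ Multiset.replicate m 1 := hcs ▸ Multiset.mem_cons_self k cs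
      exact hne (Multiset.eq_of_mem_replicate this)
  · rintro ⟨rfl, rfl⟩; exact Or.inl ⟨rfl, rfl⟩

lemma eprod_D2_zero (s : Multiset ℕ) (hs : ∀ x ∈ s, 0 < x) (a : ℕ) :
    eprod K s (D2 a 0) = if s = Multiset.replicate a 1 then 1 else 0 := by
  induction s using Multiset.induction generalizing a with
  | empty =>
    have h1 : eprod K (0 : Multiset ℕ) = 1 := by simp [eprod]
    rw [h1, one_apply']
    have h2 : (D2 a 0 = 0) ↔ ((0:Multiset ℕ) = Multiset.replicate a 1) := by
      rw [D2_eq_zero_iff]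
      constructor
      · rintro ⟨rfl, -⟩; simp
      · intro h
        have := congrArg Multiset.card h
        simp at this
        omega
    exact if_congr h2 rfl rfl
  | cons k t ih =>
    have hk : 0 < k := hs k (Multiset.mem_cons_self k t)
    have hs' : ∀ x ∈ t, 0 < x := fun x hx => hs x (Multiset.mem_cons_of_mem hx)
    rw [eprod_cons, apply_mul, sum_antidiagonal_D2]
    simp only [zero_add, Finset.sum_range_one, Nat.sub_zero]
    have hsum : ∀ i ∈ Finset.range (a+1), esym K k (D2 i 0) * eprod K t (D2 (a-i) 0)
        = (if k = 1 ∧ i = 1 then (1:K) else 0) *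
          (if t = Multiset.replicate (a-i) 1 then 1 else 0) := by
      intro i _
      rw [esym_D2 k i 0 hk, ih hs']
      congr 1
      exact if_congr (by omega) rfl rfl
    rw [Finset.sum_congr rfl hsum]
    rcases eq_or_ne k 1 with rfl | hkne
    · rcases Nat.eq_zero_or_pos a with rfl | ha
      · simp
      · rw [Finset.sum_eq_single 1]
        · obtain ⟨a', rfl⟩ : ∃ a', a = a'+1 := ⟨a-1, by omega⟩
          simp [cons_eq_replicate_succ_iff]
        · intro i _ hne; simp [hne]
        · intro h; exact absurd (Finset.mem_range.mpr (by omega)) h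
    · have h0 : ∑ i ∈ Finset.range (a+1), (if k = 1 ∧ i = 1 then (1:K) else 0) *
          (if t = Multiset.replicate (a-i) 1 then 1 else 0) = 0 :=
        Finset.sum_eq_zero (fun i _ => by simp [hkne])
      rw [h0, eq_comm, if_neg]
      intro h
      have hm : k ∈ Multiset.replicate a 1 := h ▸ Multiset.mem_cons_self k t
      exact hkne (Multiset.eq_of_mem_replicate hm)

lemma replicate_ne_two_cons (m m' : ℕ) :
    Multiset.replicate m (1:ℕ) ≠ 2 ::ₘ Multiset.replicate m' 1 := by
  intro h
  have h2 : (2:ℕ) ∈ Multiset.replicate m (1:ℕ) := h ▸ Multiset.mem_cons_self _ _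
  have := Multiset.eq_of_mem_replicate h2
  omega

lemma replicate_one_inj {m m' : ℕ} (h : Multiset.replicate m (1:ℕ) = Multiset.replicate m' 1) :
    m = m' := by
  have := congrArg Multiset.card h
  simpa using this

lemma cons_eq_two_cons_iff (k m : ℕ) (t : Multiset ℕ) :
    k ::ₘ t = 2 ::ₘ Multiset.replicate m 1 ↔
      (k = 2 ∧ t = Multiset.replicate m 1) ∨
      (k = 1 ∧ 1 ≤ m ∧ t = 2 ::ₘ Multiset.replicate (m-1) 1) := by
  rw [Multiset.cons_eq_cons]
  constructor
  · rintro (⟨rfl, rfl⟩ | ⟨hne, cs, rfl, hcs⟩)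
    · exact Or.inl ⟨rfl, rfl⟩
    · have hk1 : k = 1 := Multiset.eq_of_mem_replicate (hcs ▸ Multiset.mem_cons_self k cs)
      subst hk1
      obtain ⟨m', rfl⟩ : ∃ m', m = m'+1 := by
        rcases m with _ | m'
        · exact absurd hcs (by simp)
        · exact ⟨m', rfl⟩
      rw [Multiset.replicate_succ, Multiset.cons_inj_right] at hcs
      exact Or.inr ⟨rfl, by omega, by rw [← hcs]; simp⟩
  · rintro (⟨rfl, rfl⟩ | ⟨rfl, hm, rfl⟩)
    · exact Or.inl ⟨rfl, rfl⟩
    · right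
      refine ⟨by omega, Multiset.replicate (m-1) 1, rfl, ?_⟩
      obtain ⟨m', rfl⟩ : ∃ m', m = m'+1 := ⟨m-1, by omega⟩
      simp [Multiset.replicate_succ]

lemma eprod_D2_one (s : Multiset ℕ) (hs : ∀ x ∈ s, 0 < x) (a : ℕ) :
    eprod K s (D2 a 1) =
      (if s = Multiset.replicate (a+1) 1 then ((a:K)+1) else 0) +
      (if 1 ≤ a ∧ s = 2 ::ₘ Multiset.replicate (a-1) 1 then 1 else 0) := by
  induction s using Multiset.induction generalizing a with
  | empty =>
    have h1 : eprod K (0 : Multiset ℕ) = 1 := by simp [eprod]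
    rw [h1, one_apply', if_neg, if_neg, if_neg]
    · ring
    · rintro ⟨-, h⟩
      exact Multiset.cons_ne_zero h.symm
    · intro h
      have := congrArg Multiset.card h
      simp at this
    · rw [D2_eq_zero_iff]
      omega
  | cons k t ih =>
    have hk : 0 < k := hs k (Multiset.mem_cons_self k t)
    have hs' : ∀ x ∈ t, 0 < x := fun x hx => hs x (Multiset.mem_cons_of_mem hx)
    rw [eprod_cons, apply_mul, sum_antidiagonal_D2]
    have hrange2 : ∀ i ∈ Finset.range (a+1), (∑ j ∈ Finset.range (1+1),
        esym K k (D2 i j) * eprod K t (D2 (a-i) (1-j)))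
        = ((if k = 1 ∧ i = 1 then (1:K) else 0) *
            ((if t = Multiset.replicate ((a-i)+1) 1 then (((a-i : ℕ)):K)+1 else 0) +
             (if 1 ≤ a-i ∧ t = 2 ::ₘ Multiset.replicate (a-i-1) 1 then 1 else 0)))
          + ((if (k = 1 ∧ i = 0) ∨ (k = 2 ∧ i = 1) then (1:K) else 0) *
             (if t = Multiset.replicate (a-i) 1 then 1 else 0)) := by
      intro i _
      rw [Finset.sum_range_succ, Finset.sum_range_one]
      simp only [Nat.sub_zero, Nat.sub_self]
      rw [esym_D2 k i 0 hk, esym_D2 k i 1 hk, ih hs' (a-i), eprod_D2_zero t hs' (a-i)]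
      have e0 : (if ((k = 1 ∧ i = 1 ∧ 0 = 0) ∨ (k = 1 ∧ i = 0 ∧ 0 = 1) ∨
          (k = 2 ∧ i = 1 ∧ 0 = 1)) then (1:K) else 0) = if k = 1 ∧ i = 1 then 1 else 0 :=
        if_congr (by omega) rfl rfl
      have e1 : (if ((k = 1 ∧ i = 1 ∧ 1 = 0) ∨ (k = 1 ∧ i = 0 ∧ 1 = 1) ∨
          (k = 2 ∧ i = 1 ∧ 1 = 1)) then (1:K) else 0)
          = if (k = 1 ∧ i = 0) ∨ (k = 2 ∧ i = 1) then 1 else 0 :=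
        if_congr (by omega) rfl rfl
      rw [e0, e1]
    rw [Finset.sum_congr rfl hrange2, Finset.sum_add_distrib]
    have hS1 : ∑ i ∈ Finset.range (a+1), ((if k = 1 ∧ i = 1 then (1:K) else 0) *
            ((if t = Multiset.replicate ((a-i)+1) 1 then (((a-i : ℕ)):K)+1 else 0) +
             (if 1 ≤ a-i ∧ t = 2 ::ₘ Multiset.replicate (a-i-1) 1 then 1 else 0)))
        = if k = 1 ∧ 1 ≤ a then
            ((if t = Multiset.replicate a 1 then (((a-1 : ℕ)):K)+1 else 0) +
             (if 1 ≤ a-1 ∧ t = 2 ::ₘ Multiset.replicate (a-2) 1 then 1 else 0)) else 0 := by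
      by_cases hka : k = 1 ∧ 1 ≤ a
      · obtain ⟨rfl, ha⟩ := hka
        rw [if_pos ⟨rfl, ha⟩, Finset.sum_eq_single 1]
        · have h1 : a - 1 + 1 = a := by omega
          have h2 : a - 1 - 1 = a - 2 := by omega
          rw [h1, h2, if_pos ⟨rfl, rfl⟩, one_mul]
        · intro i _ hne
          rw [if_neg (fun h => hne h.2), zero_mul]
        · intro h
          exact absurd (Finset.mem_range.mpr (by omega)) h
      · rw [if_neg hka, Finset.sum_eq_zero]
        intro i hi
        rw [Finset.mem_range] at hi
        rw [if_neg (by omega : ¬(k = 1 ∧ i = 1)), zero_mul]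
    have hS2 : ∑ i ∈ Finset.range (a+1), ((if (k = 1 ∧ i = 0) ∨ (k = 2 ∧ i = 1) then (1:K) else 0) *
             (if t = Multiset.replicate (a-i) 1 then 1 else 0))
        = if k = 1 then (if t = Multiset.replicate a 1 then (1:K) else 0)
          else if k = 2 ∧ 1 ≤ a then (if t = Multiset.replicate (a-1) 1 then (1:K) else 0)
          else 0 := by
      rcases eq_or_ne k 1 with rfl | hk1
      · rw [if_pos rfl, Finset.sum_eq_single 0]
        · rw [if_pos (Or.inl ⟨rfl, rfl⟩), one_mul, Nat.sub_zero]
        · intro i _ hne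
          rw [if_neg (by omega : ¬((1 = 1 ∧ i = 0) ∨ (1 = 2 ∧ i = 1))), zero_mul]
        · intro h
          exact absurd (Finset.mem_range.mpr (by omega)) h
      · rw [if_neg hk1]
        by_cases hka : k = 2 ∧ 1 ≤ a
        · obtain ⟨rfl, ha⟩ := hka
          rw [if_pos ⟨rfl, ha⟩, Finset.sum_eq_single 1]
          · rw [if_pos (Or.inr ⟨rfl, rfl⟩), one_mul]
          · intro i _ hne
            rw [if_neg (by omega : ¬((2 = 1 ∧ i = 0) ∨ (2 = 2 ∧ i = 1))), zero_mul]
          · intro h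
            exact absurd (Finset.mem_range.mpr (by omega)) h
        · rw [if_neg hka, Finset.sum_eq_zero]
          intro i hi
          rw [Finset.mem_range] at hi
          rw [if_neg (by omega : ¬((k = 1 ∧ i = 0) ∨ (k = 2 ∧ i = 1))), zero_mul]
    rw [hS1, hS2]
    clear hrange2 hS1 hS2 ih
    simp only [cons_eq_replicate_succ_iff, cons_eq_two_cons_iff]
    rcases eq_or_ne k 1 with rfl | hk1
    · rcases Nat.eq_zero_or_pos a with rfl | ha
      · norm_num
        exact if_congr Iff.rfl rfl rfl
      · rw [if_pos ⟨rfl, ha⟩, if_pos rfl]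
        have hsub : a - 1 - 1 = a - 2 := by omega
        rw [hsub]
        have e1 : (if ((1:ℕ) = 1 ∧ t = Multiset.replicate a 1) then ((a:K)+1) else 0)
            = if t = Multiset.replicate a 1 then ((a:K)+1) else 0 :=
          if_congr (by tauto) rfl rfl
        have e2 : (if 1 ≤ a ∧ (((1:ℕ) = 2 ∧ t = Multiset.replicate (a-1) 1) ∨
              ((1:ℕ) = 1 ∧ 1 ≤ a-1 ∧ t = 2 ::ₘ Multiset.replicate (a-2) 1)) then (1:K) else 0)
            = if 1 ≤ a-1 ∧ t = 2 ::ₘ Multiset.replicate (a-2) 1 then (1:K) else 0 := by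
          apply if_congr _ rfl rfl
          constructor
          · rintro ⟨-, (⟨h, -⟩ | ⟨-, h1, h2⟩)⟩
            · omega
            · exact ⟨h1, h2⟩
          · rintro ⟨h1, h2⟩
            exact ⟨by omega, Or.inr ⟨rfl, h1, h2⟩⟩
        rw [e1, e2]
        have hcast : ((a - 1 : ℕ) : K) = (a : K) - 1 := by
          have := Nat.cast_sub (R := K) ha
          simpa using this
        by_cases ht : t = Multiset.replicate a 1
        · rw [if_pos ht, if_pos ht, if_pos ht]
          have hB : (if 1 ≤ a-1 ∧ t = 2 ::ₘ Multiset.replicate (a-2) 1 then (1:K) else 0) = 0 := by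
            rw [if_neg]
            rintro ⟨-, h⟩
            exact replicate_ne_two_cons a (a-2) (by rw [← ht]; exact h)
          rw [hB, hcast]
          ring
        · rw [if_neg ht, if_neg ht, if_neg ht]
          ring
    · rcases eq_or_ne k 2 with rfl | hk2
      · rcases Nat.eq_zero_or_pos a with rfl | ha
        · norm_num
        · rw [if_neg (by omega : ¬((2:ℕ) = 1 ∧ 1 ≤ a)), if_neg (by omega : (2:ℕ) ≠ 1),
            if_pos (⟨rfl, ha⟩ : (2:ℕ) = 2 ∧ 1 ≤ a),
            if_neg (by rintro ⟨h, -⟩; omega : ¬((2:ℕ) = 1 ∧ t = Multiset.replicate a 1))]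
          have e : (if 1 ≤ a ∧ (((2:ℕ) = 2 ∧ t = Multiset.replicate (a-1) 1) ∨
                ((2:ℕ) = 1 ∧ 1 ≤ a-1 ∧ t = 2 ::ₘ Multiset.replicate (a-1-1) 1)) then (1:K) else 0)
              = if t = Multiset.replicate (a-1) 1 then (1:K) else 0 := by
            apply if_congr _ rfl rfl
            constructor
            · rintro ⟨-, (⟨-, h⟩ | ⟨h, -⟩)⟩
              · exact h
              · omega
            · intro h
              exact ⟨ha, Or.inl ⟨rfl, h⟩⟩
          rw [e]
      · rw [if_neg (by omega : ¬(k = 1 ∧ 1 ≤ a)), if_neg hk1,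
          if_neg (by omega : ¬(k = 2 ∧ 1 ≤ a)),
          if_neg (by rintro ⟨h, -⟩; omega : ¬(k = 1 ∧ t = Multiset.replicate a 1)), if_neg]
        rintro ⟨-, (⟨h, -⟩ | ⟨h, -⟩)⟩ <;> omega

lemma typeOf_D2_zero (n : ℕ) (hn : 0 < n) : typeOf (D2 n 0) = {n} := by
  have h : D2 n 0 = Finsupp.single 0 n := by
    ext j
    rw [D2_apply, Finsupp.single_apply]
    split_ifs <;> omega
  rw [h]
  unfold typeOf
  rw [Finsupp.support_single_ne_zero 0 (by omega)]
  simp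

lemma typeOf_D2_one (a : ℕ) (ha : 0 < a) : typeOf (D2 a 1) = {a, 1} := by
  have hdis : Disjoint (Finsupp.single (0:ℕ) a).support (Finsupp.single (1:ℕ) (1:ℕ)).support := by
    rw [Finset.disjoint_left]
    intro x hx hx'
    have h0 := Finsupp.support_single_subset hx
    have h1 := Finsupp.support_single_subset hx'
    simp only [Finset.mem_singleton] at h0 h1
    omega
  unfold typeOf
  rw [show (D2 a 1).support = (Finsupp.single (0:ℕ) a).support ∪ (Finsupp.single (1:ℕ) (1:ℕ)).support
    from Finsupp.support_add_eq hdis]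
  rw [Finsupp.support_single_ne_zero 0 (by omega), Finsupp.support_single_ne_zero 1 (by omega)]
  have : ({0} ∪ {1} : Finset ℕ) = {0, 1} := by decide
  rw [this]
  have h01 : ({0, 1} : Finset ℕ).val = (0 ::ₘ 1 ::ₘ 0) := rfl
  rw [h01]
  simp [D2_apply]

lemma apply_sum {ι : Type*} (s : Finset ι) (f : ι → MvPowerSeries ℕ K) (d : ℕ →₀ ℕ) :
    (∑ i ∈ s, f i) d = ∑ i ∈ s, f i d := by
  exact map_sum (MvPowerSeries.coeff d) f s

lemma apply_smul (c : K) (φ : MvPowerSeries ℕ K) (d : ℕ →₀ ℕ) : (c • φ) d = c * φ d := rfl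

lemma key1 (n : ℕ) (hn : 0 < n) (l : Nat.Partition n) (c : Nat.Partition n → K)
    (h : msym K l.parts = ∑ μ : Nat.Partition n, c μ • eprod K μ.parts) :
    c (onePartition n) = if l.parts = {n} then 1 else 0 := by
  have hc := congrFun h (D2 n 0)
  have hL : msym K l.parts (D2 n 0) = if ({n} : Multiset ℕ) = l.parts then 1 else 0 := by
    show (if typeOf (D2 n 0) = l.parts then (1:K) else 0) = _
    rw [typeOf_D2_zero n hn]
  have hR : (∑ μ : Nat.Partition n, c μ • eprod K μ.parts) (D2 n 0) = c (onePartition n) := by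
    rw [apply_sum]
    have e : ∀ μ ∈ (Finset.univ : Finset (Nat.Partition n)),
        (c μ • eprod K μ.parts) (D2 n 0)
        = c μ * (if μ.parts = Multiset.replicate n 1 then 1 else 0) := by
      intro μ _
      rw [apply_smul, eprod_D2_zero μ.parts (fun x hx => μ.parts_pos hx) n]
    rw [Finset.sum_congr rfl e, Finset.sum_eq_single (onePartition n)]
    · rw [if_pos (show (onePartition n).parts = Multiset.replicate n 1 from rfl), mul_one]
    · intro μ _ hne
      rw [if_neg (fun hp : μ.parts = Multiset.replicate n 1 =>
        hne (Nat.Partition.ext hp)), mul_zero]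
    · intro hmem
      exact absurd (Finset.mem_univ _) hmem
  rw [hL, hR] at hc
  rw [← hc]
  exact if_congr ⟨Eq.symm, Eq.symm⟩ rfl rfl

lemma key2 (n : ℕ) (hn : 2 ≤ n) (l : Nat.Partition n) (c : Nat.Partition n → K)
    (h : msym K l.parts = ∑ μ : Nat.Partition n, c μ • eprod K μ.parts) :
    c (twoOnePartition n hn) =
      if l.parts = {n} then -(n : K) else if l.parts = {n - 1, 1} then 1 else 0 := by
  have hc := congrFun h (D2 (n-1) 1)
  have hL : msym K l.parts (D2 (n-1) 1)
      = if ({n-1, 1} : Multiset ℕ) = l.parts then (1:K) else 0 := by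
    show (if typeOf (D2 (n-1) 1) = l.parts then (1:K) else 0) = _
    rw [typeOf_D2_one (n-1) (by omega)]
  have hR : (∑ μ : Nat.Partition n, c μ • eprod K μ.parts) (D2 (n-1) 1)
      = (n:K) * c (onePartition n) + c (twoOnePartition n hn) := by
    rw [apply_sum]
    have e : ∀ μ ∈ (Finset.univ : Finset (Nat.Partition n)),
        (c μ • eprod K μ.parts) (D2 (n-1) 1)
        = c μ * (if μ.parts = Multiset.replicate n 1 then (n:K) else 0)
          + c μ * (if μ.parts = 2 ::ₘ Multiset.replicate (n-2) 1 then 1 else 0) := by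
      intro μ _
      rw [apply_smul, eprod_D2_one μ.parts (fun x hx => μ.parts_pos hx) (n-1), mul_add]
      congr 2
      · rw [show n - 1 + 1 = n by omega,
          show ((n-1 : ℕ):K) + 1 = (n:K) by
            rw [Nat.cast_sub (by omega : 1 ≤ n)]; push_cast; ring]
      · apply if_congr _ rfl rfl
        constructor
        · rintro ⟨-, h2⟩
          rw [show n-1-1 = n-2 by omega] at h2
          exact h2
        · intro h2
          exact ⟨by omega, by rw [show n-1-1 = n-2 by omega]; exact h2⟩
    rw [Finset.sum_congr rfl e, Finset.sum_add_distrib]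
    congr 1
    · rw [Finset.sum_eq_single (onePartition n)]
      · rw [if_pos (show (onePartition n).parts = Multiset.replicate n 1 from rfl)]
        ring
      · intro μ _ hne
        rw [if_neg (fun hp : μ.parts = Multiset.replicate n 1 =>
          hne (Nat.Partition.ext hp)), mul_zero]
      · intro hmem
        exact absurd (Finset.mem_univ _) hmem
    · rw [Finset.sum_eq_single (twoOnePartition n hn)]
      · rw [if_pos (show (twoOnePartition n hn).parts
            = 2 ::ₘ Multiset.replicate (n-2) 1 from rfl), mul_one]
      · intro μ _ hne
        rw [if_neg (fun hp : μ.parts = 2 ::ₘ Multiset.replicate (n-2) 1 =>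
          hne (Nat.Partition.ext hp)), mul_zero]
      · intro hmem
        exact absurd (Finset.mem_univ _) hmem
  rw [hL, hR, key1 n (by omega) l c h] at hc
  have hcard : l.parts = {n} → ¬ (({n-1,1} : Multiset ℕ) = l.parts) := by
    intro h1 h2
    rw [h1] at h2
    have := congrArg Multiset.card h2
    simp at this
  by_cases h1 : l.parts = {n}
  · rw [if_neg (hcard h1), if_pos h1] at hc
    rw [if_pos h1]
    linear_combination -hc
  · rw [if_neg h1] at hc
    rw [if_neg h1]
    by_cases h2 : l.parts = {n-1,1}
    · rw [if_pos h2]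
      rw [if_pos h2.symm] at hc
      linear_combination -hc
    · rw [if_neg h2]
      rw [if_neg (fun hh => h2 hh.symm)] at hc
      linear_combination -hc


/-- For `λ ⊢ n`: the coefficient of `e₁ⁿ` in the `e`-expansion
of `m_λ` is `1` if `λ = (n)` and `0` otherwise; and (for `n ≥ 2`) the
coefficient of `e₂e₁^{n-2}` is `-n` if `λ = (n)`, `1` if `λ = (n-1, 1)`, and `0`
otherwise. -/
theorem statement14 :
    (∀ (n : ℕ), 0 < n → ∀ (l : Nat.Partition n) (c : Nat.Partition n → K),
      msym K l.parts = ∑ μ : Nat.Partition n, c μ • eprod K μ.parts →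
        c (onePartition n) = if l.parts = {n} then 1 else 0) ∧
    (∀ (n : ℕ) (hn : 2 ≤ n), ∀ (l : Nat.Partition n) (c : Nat.Partition n → K),
      msym K l.parts = ∑ μ : Nat.Partition n, c μ • eprod K μ.parts →
        c (twoOnePartition n hn) =
          if l.parts = {n} then -(n : K)
          else if l.parts = {n - 1, 1} then 1 else 0) :=
  ⟨fun n hn l c h => key1 n hn l c h, fun n hn l c h => key2 n hn l c h⟩

end
end

section
/- The number of cyclically alternating permutations of [2n] — alternating permutations a_1 > a_2 < ⋯ < a_{2n} of [2n] that additionally satisfy a_{2n} < a_1 — equals n · E_{2n−1}, where E_{2n−1} is the number of alternating permutations of [2n−1]. -/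
noncomputable section

def IsAlt {m : ℕ} (w : Equiv.Perm (Fin m)) : Prop :=
  ∀ (i : ℕ) (h : i + 1 < m),
    if i % 2 = 0 then w ⟨i + 1, h⟩ < w ⟨i, Nat.lt_of_succ_lt h⟩
    else w ⟨i, Nat.lt_of_succ_lt h⟩ < w ⟨i + 1, h⟩

def eulerE (m : ℕ) : ℕ := Nat.card {w : Equiv.Perm (Fin m) // IsAlt w}

namespace S19

/- bridging lemmas for IsAlt -/
lemma isAlt_even {m : ℕ} {w : Equiv.Perm (Fin m)} (hw : IsAlt w) {i : ℕ} (h : i + 1 < m)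
    (hp : i % 2 = 0) : w ⟨i + 1, h⟩ < w ⟨i, Nat.lt_of_succ_lt h⟩ := by
  have := hw i h; rwa [if_pos hp] at this

lemma isAlt_odd {m : ℕ} {w : Equiv.Perm (Fin m)} (hw : IsAlt w) {i : ℕ} (h : i + 1 < m)
    (hp : i % 2 = 1) : w ⟨i, Nat.lt_of_succ_lt h⟩ < w ⟨i + 1, h⟩ := by
  have := hw i h; rwa [if_neg (by omega)] at this

lemma isAlt_of {m : ℕ} {w : Equiv.Perm (Fin m)}
    (h0 : ∀ (i : ℕ) (h : i + 1 < m), i % 2 = 0 → w ⟨i + 1, h⟩ < w ⟨i, Nat.lt_of_succ_lt h⟩)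
    (h1 : ∀ (i : ℕ) (h : i + 1 < m), i % 2 = 1 → w ⟨i, Nat.lt_of_succ_lt h⟩ < w ⟨i + 1, h⟩) :
    IsAlt w := by
  intro i h
  rcases Nat.mod_two_eq_zero_or_one i with hp | hp
  · rw [if_pos hp]; exact h0 i h hp
  · rw [if_neg (by omega)]; exact h1 i h hp

/-- cyclic alternating condition, in wrap-around form -/
def CAlt {N : ℕ} [NeZero N] (w : Equiv.Perm (Fin N)) : Prop :=
  ∀ i : Fin N, (i.val % 2 = 0 → w (i + 1) < w i) ∧ (i.val % 2 = 1 → w i < w (i + 1))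

variable {n : ℕ} [NeZero (2*n)]

lemma npos : 0 < n := by
  have := Nat.pos_of_ne_zero (NeZero.ne (2*n)); omega

lemma val_add_one (i : Fin (2*n)) :
    (i + 1).val = if i.val + 1 < 2*n then i.val + 1 else 0 := by
  have hn : 0 < n := npos
  have h1 : (1 : Fin (2*n)).val = 1 := by
    rw [Fin.val_one']; exact Nat.mod_eq_of_lt (by omega)
  have h2 := i.isLt
  rw [Fin.val_add, h1]
  split
  · next h => exact Nat.mod_eq_of_lt h
  · next h =>
      have : i.val + 1 = 2*n := by omega
      rw [this, Nat.mod_self]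

lemma val_add_one_of_lt {i : Fin (2*n)} (h : i.val + 1 < 2*n) : (i + 1).val = i.val + 1 := by
  rw [val_add_one, if_pos h]

lemma val_add_one_of_last {i : Fin (2*n)} (h : ¬ i.val + 1 < 2*n) : (i + 1).val = 0 := by
  rw [val_add_one, if_neg h]

set_option maxHeartbeats 1000000 in
lemma cAlt_iff (w : Equiv.Perm (Fin (2*n))) :
    (IsAlt w ∧ w ⟨2 * n - 1, by have := @npos n _; omega⟩ < w ⟨0, by have := @npos n _; omega⟩)
      ↔ CAlt w := by
  have hn : 0 < n := npos
  constructor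
  · rintro ⟨h1, h2⟩ i
    rcases lt_or_ge (i.val + 1) (2*n) with h | h
    · have hi1 : i + 1 = ⟨i.val + 1, h⟩ := Fin.ext (val_add_one_of_lt h)
      constructor
      · intro hp
        have h3 := isAlt_even h1 h hp
        rw [Fin.eta] at h3
        rw [hi1]; exact h3
      · intro hp
        have h3 := isAlt_odd h1 h hp
        rw [Fin.eta] at h3
        rw [hi1]; exact h3
    · have hiv : i.val = 2*n - 1 := by have := i.isLt; omega
      have hi : i = ⟨2*n - 1, by omega⟩ := Fin.ext hiv
      have hi1 : i + 1 = ⟨0, by omega⟩ := Fin.ext (val_add_one_of_last (by omega))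
      constructor
      · intro hp; omega
      · intro _
        rw [hi1]
        have e1 : w i = w ⟨2*n - 1, by omega⟩ := congrArg w hi
        rw [e1]; exact h2
  · intro h
    constructor
    · apply isAlt_of
      · intro i hi hp
        have h3 := (h ⟨i, Nat.lt_of_succ_lt hi⟩).1 hp
        have hi1 : (⟨i, Nat.lt_of_succ_lt hi⟩ : Fin (2*n)) + 1 = ⟨i + 1, hi⟩ :=
          Fin.ext (val_add_one_of_lt hi)
        rwa [hi1] at h3
      · intro i hi hp
        have h3 := (h ⟨i, Nat.lt_of_succ_lt hi⟩).2 hp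
        have hi1 : (⟨i, Nat.lt_of_succ_lt hi⟩ : Fin (2*n)) + 1 = ⟨i + 1, hi⟩ :=
          Fin.ext (val_add_one_of_lt hi)
        rwa [hi1] at h3
    · have h3 := (h ⟨2*n - 1, by omega⟩).2 (by simp; omega)
      have hi1 : (⟨2*n - 1, by omega⟩ : Fin (2*n)) + 1 = ⟨0, by omega⟩ :=
        Fin.ext (val_add_one_of_last (by simp; omega))
      rwa [hi1] at h3

/-- parity of wrap-around sums -/
lemma val_add_parity (i j : Fin (2*n)) : (i + j).val % 2 = (i.val + j.val) % 2 := by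
  rw [Fin.val_add]; exact Nat.mod_mod_of_dvd _ ⟨n, rfl⟩

lemma val_sub_parity (i j : Fin (2*n)) :
    (i - j).val % 2 = (i.val + j.val) % 2 := by
  rw [Fin.sub_def]
  have hj := j.isLt
  have h2 : (2*n - j.val + i.val) % (2*n) % 2 = (2*n - j.val + i.val) % 2 :=
    Nat.mod_mod_of_dvd _ ⟨n, rfl⟩
  rw [h2]; omega

/-- the top element `2n-1` of `Fin (2n)` -/
def top : Fin (2*n) := ⟨2*n - 1, by have := @npos n _; omega⟩

lemma le_top (x : Fin (2*n)) : x ≤ top := by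
  have := x.isLt
  show x.val ≤ (2*n - 1)
  omega

lemma eq_top_iff {x : Fin (2*n)} : x = top ↔ x.val = 2*n - 1 := by
  constructor
  · intro h; rw [h]; rfl
  · intro h; exact Fin.ext h

lemma lt_top_of_ne {x : Fin (2*n)} (h : x ≠ top) : x < top :=
  lt_of_le_of_ne (le_top x) h

/-- position of the maximum in a cyclically alternating permutation is even -/
lemma p_even {w : Equiv.Perm (Fin (2*n))} (hw : CAlt w) : (w⁻¹ top).val % 2 = 0 := by
  by_contra h
  have h2 := (hw (w⁻¹ top)).2 (by omega)
  rw [show w (w⁻¹ top) = top from w.apply_symm_apply top] at h2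
  exact absurd (le_top (w (w⁻¹ top + 1))) (not_le.mpr h2)

lemma apply_ne_top {w : Equiv.Perm (Fin (2*n))} {x : Fin (2*n)} (hx : x ≠ w⁻¹ top) :
    w x ≠ top := by
  intro h
  exact hx (by rw [← h]; exact (w.symm_apply_apply x).symm)

lemma val_lt_M {w : Equiv.Perm (Fin (2*n))} {x : Fin (2*n)} (hx : x ≠ w⁻¹ top) :
    (w x).val < 2*n - 1 := by
  have h1 := apply_ne_top hx
  have h2 := (w x).isLt
  have h3 : (w x).val ≠ 2*n - 1 := fun hc => h1 (eq_top_iff.mpr hc)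
  omega

/-! ### Forward map -/

/-- embed `i+1` into `Fin (2n)` -/
def emb1 (i : Fin (2*n-1)) : Fin (2*n) := ⟨i.val + 1, by have := i.isLt; omega⟩

lemma emb1_ne_zero (i : Fin (2*n-1)) : emb1 i ≠ 0 := by
  intro h
  have : (emb1 i).val = 0 := by rw [h]; rfl
  simp [emb1] at this

lemma add_p_ne {i : Fin (2*n-1)} {p : Fin (2*n)} : emb1 i + p ≠ p := by
  intro h
  have h2 : emb1 i + p = 0 + p := by rw [h, zero_add]
  exact emb1_ne_zero i (add_right_cancel h2)

/-- the forward function underlying the alternating permutation of `[2n-1]` -/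
def fwdF (w : Equiv.Perm (Fin (2*n))) : Fin (2*n-1) → Fin (2*n-1) :=
  fun i => Fin.rev ⟨(w (emb1 i + w⁻¹ top)).val % (2*n-1), by
    have hn := @npos n _
    exact Nat.mod_lt _ (by omega)⟩

lemma fwdF_eq (w : Equiv.Perm (Fin (2*n))) (i : Fin (2*n-1)) :
    fwdF w i = Fin.rev ⟨(w (emb1 i + w⁻¹ top)).val, val_lt_M add_p_ne⟩ := by
  unfold fwdF
  congr 1
  apply Fin.ext
  show _ % (2*n-1) = _
  exact Nat.mod_eq_of_lt (val_lt_M add_p_ne)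

lemma fwdF_inj (w : Equiv.Perm (Fin (2*n))) : Function.Injective (fwdF w) := by
  intro a b hab
  rw [fwdF_eq, fwdF_eq] at hab
  have h1 := Fin.rev_injective hab
  have h2 := congrArg Fin.val h1
  have h3 : emb1 a + w⁻¹ top = emb1 b + w⁻¹ top := w.injective (Fin.ext h2)
  have h4 : emb1 a = emb1 b := add_right_cancel h3
  have h5 : a.val + 1 = b.val + 1 := congrArg Fin.val h4
  exact Fin.ext (by omega)

/-- the alternating permutation of `[2n-1]` associated to a cyclic alternating perm -/
def fwdPerm (w : Equiv.Perm (Fin (2*n))) : Equiv.Perm (Fin (2*n-1)) :=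
  Equiv.ofBijective (fwdF w) (Finite.injective_iff_bijective.mp (fwdF_inj w))

lemma fwdPerm_apply (w : Equiv.Perm (Fin (2*n))) (i : Fin (2*n-1)) :
    fwdPerm w i = fwdF w i := rfl

attribute [irreducible] fwdPerm

lemma fwd_isAlt {w : Equiv.Perm (Fin (2*n))} (hw : CAlt w) : IsAlt (fwdPerm w) := by
  have hn := @npos n _
  have hpe : (w⁻¹ top).val % 2 = 0 := p_even hw
  have key : ∀ (i : ℕ) (h : i + 1 < 2*n - 1),
      (emb1 (⟨i, Nat.lt_of_succ_lt h⟩ : Fin (2*n-1)) + w⁻¹ top) + 1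
        = emb1 (⟨i + 1, h⟩ : Fin (2*n-1)) + w⁻¹ top := by
    intro i h
    rw [add_right_comm]
    congr 1
    apply Fin.ext
    rw [val_add_one_of_lt (by show i + 1 + 1 < 2*n; omega)]
    rfl
  have par : ∀ (i : ℕ) (h : i + 1 < 2*n - 1),
      (emb1 (⟨i, Nat.lt_of_succ_lt h⟩ : Fin (2*n-1)) + w⁻¹ top).val % 2 = (i + 1) % 2 := by
    intro i h
    rw [val_add_parity]
    show (i + 1 + (w⁻¹ top).val) % 2 = _
    omega
  apply isAlt_of
  · intro i h hpar
    have hq := (hw (emb1 ⟨i, Nat.lt_of_succ_lt h⟩ + w⁻¹ top)).2 (by rw [par i h]; omega)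
    rw [key i h] at hq
    rw [fwdPerm_apply, fwdPerm_apply, fwdF_eq, fwdF_eq]
    exact Fin.rev_lt_rev.mpr hq
  · intro i h hpar
    have hq := (hw (emb1 ⟨i, Nat.lt_of_succ_lt h⟩ + w⁻¹ top)).1 (by rw [par i h]; omega)
    rw [key i h] at hq
    rw [fwdPerm_apply, fwdPerm_apply, fwdF_eq, fwdF_eq]
    exact Fin.rev_lt_rev.mpr hq

/-! ### Backward map -/

/-- the even position `2k` -/
def pk (k : Fin n) : Fin (2*n) := ⟨2*k.val, by have := k.isLt; omega⟩

lemma sub_val_zero_iff {i p : Fin (2*n)} : (i - p).val = 0 ↔ i = p := by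
  constructor
  · intro h
    have h2 : i - p = 0 := Fin.ext (by simpa using h)
    exact sub_eq_zero.mp h2
  · intro h
    rw [h, sub_self]
    simp

/-- the backward function -/
def bwdF (k : Fin n) (v : Equiv.Perm (Fin (2*n-1))) : Fin (2*n) → Fin (2*n) :=
  fun i =>
    if h : (i - pk k).val = 0 then top
    else Fin.castLE (by have := @npos n _; omega)
      ((v ⟨(i - pk k).val - 1, by have := (i - pk k).isLt; omega⟩).rev)

lemma bwdF_of_eq {k : Fin n} (v : Equiv.Perm (Fin (2*n-1))) {i : Fin (2*n)}
    (h : (i - pk k).val = 0) : bwdF k v i = top := dif_pos h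

lemma bwdF_of_ne {k : Fin n} (v : Equiv.Perm (Fin (2*n-1))) {i : Fin (2*n)}
    (h : ¬ (i - pk k).val = 0) :
    bwdF k v i = Fin.castLE (by have := @npos n _; omega)
      ((v ⟨(i - pk k).val - 1, by have := (i - pk k).isLt; omega⟩).rev) := dif_neg h

lemma castLE_ne_top {x : Fin (2*n-1)} :
    (Fin.castLE (by have := @npos n _; omega : 2*n-1 ≤ 2*n) x) ≠ top := by
  intro h
  have h1 : x.val = 2*n - 1 := congrArg Fin.val h
  have := x.isLt
  omega

lemma bwdF_ne_top {k : Fin n} (v : Equiv.Perm (Fin (2*n-1))) {i : Fin (2*n)}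
    (h : ¬ (i - pk k).val = 0) : bwdF k v i ≠ top := by
  rw [bwdF_of_ne v h]; exact castLE_ne_top

lemma bwdF_inj (k : Fin n) (v : Equiv.Perm (Fin (2*n-1))) : Function.Injective (bwdF k v) := by
  intro a b hab
  by_cases ha : (a - pk k).val = 0 <;> by_cases hb : (b - pk k).val = 0
  · rw [sub_val_zero_iff] at ha hb; rw [ha, hb]
  · rw [bwdF_of_eq v ha] at hab; exact absurd hab.symm (bwdF_ne_top v hb)
  · rw [bwdF_of_eq v hb] at hab; exact absurd hab (bwdF_ne_top v ha)
  · rw [bwdF_of_ne v ha, bwdF_of_ne v hb] at hab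
    have h1 := congrArg Fin.val hab
    have h2 := v.injective (Fin.rev_injective (Fin.ext h1))
    have h3 := congrArg Fin.val h2
    have h4 : (a - pk k).val = (b - pk k).val := by
      have h5 : (a - pk k).val - 1 = (b - pk k).val - 1 := h3
      omega
    have h6 : a - pk k = b - pk k := Fin.ext h4
    calc a = a - pk k + pk k := (sub_add_cancel a (pk k)).symm
    _ = b - pk k + pk k := by rw [h6]
    _ = b := sub_add_cancel b (pk k)

def bwdPerm (k : Fin n) (v : Equiv.Perm (Fin (2*n-1))) : Equiv.Perm (Fin (2*n)) :=
  Equiv.ofBijective (bwdF k v) (Finite.injective_iff_bijective.mp (bwdF_inj k v))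

lemma bwdPerm_apply (k : Fin n) (v : Equiv.Perm (Fin (2*n-1))) (i : Fin (2*n)) :
    bwdPerm k v i = bwdF k v i := rfl

attribute [irreducible] bwdPerm

lemma sub_parity (k : Fin n) (i : Fin (2*n)) : (i - pk k).val % 2 = i.val % 2 := by
  rw [val_sub_parity]
  show (i.val + 2*k.val) % 2 = _
  omega

lemma sub_add_one (k : Fin n) (i : Fin (2*n)) : (i + 1) - pk k = (i - pk k) + 1 :=
  add_sub_right_comm i 1 (pk k)

lemma bwd_cAlt (k : Fin n) {v : Equiv.Perm (Fin (2*n-1))} (hv : IsAlt v) :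
    CAlt (bwdPerm k v) := by
  have hn := @npos n _
  intro i
  have hpar := sub_parity k i
  have hs := sub_add_one k i
  have hjlt := (i - pk k).isLt
  rcases eq_or_ne (i - pk k).val 0 with h0 | h0
  · -- `i` is the position of the maximum
    have hi2 : i.val % 2 = 0 := by omega
    have h1v : ((i + 1) - pk k).val = 1 := by
      rw [hs, val_add_one_of_lt (by omega)]; omega
    constructor
    · intro _
      rw [bwdPerm_apply, bwdPerm_apply, bwdF_of_eq v h0]
      exact lt_top_of_ne (bwdF_ne_top v (by omega))
    · intro h; omega
  · rcases eq_or_ne (i - pk k).val (2*n - 1) with hL | hL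
    · -- `i+1` is the position of the maximum
      have hi2 : i.val % 2 = 1 := by omega
      have h1v : ((i + 1) - pk k).val = 0 := by
        rw [hs, val_add_one_of_last (by omega)]
      constructor
      · intro h; omega
      · intro _
        rw [bwdPerm_apply, bwdPerm_apply, bwdF_of_eq v h1v]
        exact lt_top_of_ne (bwdF_ne_top v h0)
    · -- generic position
      have h1v : ((i + 1) - pk k).val = (i - pk k).val + 1 := by
        rw [hs, val_add_one_of_lt (by omega)]
      have h1ne : ¬ ((i + 1) - pk k).val = 0 := by omega
      constructor
      · intro he
        rw [bwdPerm_apply, bwdPerm_apply, bwdF_of_ne v h1ne, bwdF_of_ne v h0]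
        apply Fin.rev_lt_rev.mpr
        have e1 : (⟨((i+1) - pk k).val - 1, by have := ((i+1) - pk k).isLt; omega⟩ : Fin (2*n-1))
            = ⟨((i - pk k).val - 1) + 1, by omega⟩ :=
          Fin.ext (by show ((i+1) - pk k).val - 1 = ((i - pk k).val - 1) + 1; omega)
        rw [e1]
        exact isAlt_odd hv (by omega) (by omega)
      · intro ho
        rw [bwdPerm_apply, bwdPerm_apply, bwdF_of_ne v h1ne, bwdF_of_ne v h0]
        apply Fin.rev_lt_rev.mpr
        have e1 : (⟨((i+1) - pk k).val - 1, by have := ((i+1) - pk k).isLt; omega⟩ : Fin (2*n-1))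
            = ⟨((i - pk k).val - 1) + 1, by omega⟩ :=
          Fin.ext (by show ((i+1) - pk k).val - 1 = ((i - pk k).val - 1) + 1; omega)
        rw [e1]
        exact isAlt_even hv (by omega) (by omega)

/-! ### The bijection -/

lemma emb1_add {i p : Fin (2*n)} (h : (i - p).val ≠ 0) :
    emb1 ⟨(i - p).val - 1, by have := (i - p).isLt; have := @npos n _; omega⟩ + p = i := by
  have h1 : emb1 ⟨(i - p).val - 1, by have := (i - p).isLt; have := @npos n _; omega⟩ = i - p :=
    Fin.ext (by show (i - p).val - 1 + 1 = (i - p).val; omega)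
  rw [h1, sub_add_cancel]

def kOf (w : Equiv.Perm (Fin (2*n))) : Fin n :=
  ⟨(w⁻¹ top).val / 2, by have := (w⁻¹ top).isLt; have := @npos n _; omega⟩

lemma pk_kOf {w : Equiv.Perm (Fin (2*n))} (hw : CAlt w) : pk (kOf w) = w⁻¹ top := by
  have he := p_even hw
  apply Fin.ext
  show 2 * ((w⁻¹ top).val / 2) = (w⁻¹ top).val
  omega

def fwdPair (x : {w : Equiv.Perm (Fin (2*n)) // CAlt w}) :
    Fin n × {v : Equiv.Perm (Fin (2*n-1)) // IsAlt v} :=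
  (kOf x.1, ⟨fwdPerm x.1, fwd_isAlt x.2⟩)

def bwdPair (y : Fin n × {v : Equiv.Perm (Fin (2*n-1)) // IsAlt v}) :
    {w : Equiv.Perm (Fin (2*n)) // CAlt w} :=
  ⟨bwdPerm y.1 y.2.1, bwd_cAlt y.1 y.2.2⟩

set_option maxHeartbeats 2000000 in
lemma main_left_inv (x : {w : Equiv.Perm (Fin (2*n)) // CAlt w}) : bwdPair (fwdPair x) = x := by
  obtain ⟨w, hw⟩ := x
  have hpk : pk (kOf w) = w⁻¹ top := pk_kOf hw
  apply Subtype.ext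
  apply Equiv.ext
  intro i
  show bwdPerm (kOf w) (fwdPerm w) i = w i
  rw [bwdPerm_apply]
  rcases eq_or_ne (i - pk (kOf w)).val 0 with h0 | h0
  · rw [bwdF_of_eq _ h0]
    have h1 : i = pk (kOf w) := sub_val_zero_iff.mp h0
    rw [h1, hpk]
    exact (w.apply_symm_apply top).symm
  · rw [bwdF_of_ne _ h0, fwdPerm_apply, fwdF_eq, Fin.rev_rev]
    apply Fin.ext
    have hX : emb1 ⟨(i - pk (kOf w)).val - 1,
        by have := (i - pk (kOf w)).isLt; have := @npos n _; omega⟩ + w⁻¹ top = i := by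
      rw [← hpk]
      exact emb1_add h0
    exact congrArg (fun x => (w x).val) hX

set_option maxHeartbeats 2000000 in
lemma main_right_inv (y : Fin n × {v : Equiv.Perm (Fin (2*n-1)) // IsAlt v}) :
    fwdPair (bwdPair y) = y := by
  obtain ⟨k, v, hv⟩ := y
  have hWtop : bwdPerm k v (pk k) = top := by
    rw [bwdPerm_apply, bwdF_of_eq v (by rw [sub_self]; simp)]
  have hWinv : (bwdPerm k v)⁻¹ top = pk k := by
    rw [← hWtop]; exact Equiv.symm_apply_apply _ _
  have hn := @npos n _
  show (_, _) = (_, _)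
  refine Prod.ext ?_ ?_
  · show kOf (bwdPerm k v) = k
    apply Fin.ext
    show ((bwdPerm k v)⁻¹ top).val / 2 = k.val
    rw [hWinv]
    show 2 * k.val / 2 = k.val
    omega
  · apply Subtype.ext
    show fwdPerm (bwdPerm k v) = v
    apply Equiv.ext
    intro i
    rw [fwdPerm_apply]
    have hsub : emb1 i + pk k - pk k = emb1 i := add_sub_cancel_right _ _
    have hne : ¬ (emb1 i + pk k - pk k).val = 0 := by
      rw [hsub]; show ¬ i.val + 1 = 0; omega
    have eIdx : (⟨(emb1 i + pk k - pk k).val - 1,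
        by have := (emb1 i + pk k - pk k).isLt; omega⟩ : Fin (2*n-1)) = i := by
      apply Fin.ext
      have h2 := congrArg Fin.val hsub
      show (emb1 i + pk k - pk k).val - 1 = i.val
      have h3 : (emb1 i).val = i.val + 1 := rfl
      omega
    have hq : bwdPerm k v (emb1 i + pk k) = Fin.castLE (by omega) ((v i).rev) := by
      rw [bwdPerm_apply, bwdF_of_ne v hne, eIdx]
    have harg : emb1 i + (bwdPerm k v)⁻¹ top = emb1 i + pk k :=
      congrArg (fun x => emb1 i + x) hWinv
    have e_q : bwdPerm k v (emb1 i + (bwdPerm k v)⁻¹ top)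
        = Fin.castLE (by omega) ((v i).rev) :=
      (congrArg (bwdPerm k v) harg).trans hq
    rw [fwdF_eq]
    have hvals := congrArg Fin.val e_q
    have h2 : (bwdPerm k v (emb1 i + (bwdPerm k v)⁻¹ top)).val
        = 2*n - 1 - ((v i).val + 1) := hvals.trans rfl
    have hlt := (v i).isLt
    apply Fin.ext
    show 2*n - 1 - ((bwdPerm k v (emb1 i + (bwdPerm k v)⁻¹ top)).val + 1) = (v i).val
    omega

def mainEquiv : {w : Equiv.Perm (Fin (2*n)) // CAlt w} ≃
    (Fin n × {v : Equiv.Perm (Fin (2*n-1)) // IsAlt v}) :=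
  ⟨fwdPair, bwdPair, main_left_inv, main_right_inv⟩

end S19

/-- For `n ≥ 1`, the number of cyclically alternating
permutations of `[2n]` — alternating permutations `a₁ > a₂ < ⋯` of `[2n]` that
additionally satisfy `a_{2n} < a₁` — equals `n · E_{2n-1}`. -/
theorem statement19 (n : ℕ) (hn : 0 < n) :
    Nat.card {w : Equiv.Perm (Fin (2 * n)) //
        IsAlt w ∧ w ⟨2 * n - 1, by omega⟩ < w ⟨0, by omega⟩} =
      n * eulerE (2 * n - 1) := by
  haveI : NeZero (2*n) := ⟨by omega⟩
  have e1 : {w : Equiv.Perm (Fin (2 * n)) //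
        IsAlt w ∧ w ⟨2 * n - 1, by omega⟩ < w ⟨0, by omega⟩}
      ≃ {w : Equiv.Perm (Fin (2*n)) // S19.CAlt w} :=
    Equiv.subtypeEquivRight (fun w => S19.cAlt_iff w)
  have e2 : Nat.card (Fin n) = n := Nat.card_eq_fintype_card.trans (Fintype.card_fin n)
  rw [Nat.card_congr e1, Nat.card_congr S19.mainEquiv, Nat.card_prod, e2]
  rfl

end
end
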